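/- Every k×n Latin rectangle with 0 ≤ k ≤ n can be completed to a Latin square of order n, i.e., there exists a Latin square of order n whose first k rows coincide with the given Latin rectangle. -/

import Mathlib

/-- A Latin square of order `n`: each symbol occurs exactly once in each row
and exactly once in each column. -/
def IsLatinSquare {n : ℕ} (A : Fin n → Fin n → Fin n) : Prop :=
  (∀ i, Function.Bijective fun j => A i j) ∧ (∀ j, Function.Bijective fun i => A i j)

/-- A `k × n` Latin rectangle: no symbol occurs more than once in any row
or in any column. -/
def IsLatinRect {k n : ℕ} (A : Fin k → Fin n → Fin n) : Prop :=
  (∀ i, Function.Injective fun j => A i j) ∧ (∀ j, Function.Injective fun i => A i j)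

lemma latin_step (k n : ℕ) (hk : k < n) (A : Fin k → Fin n → Fin n) (hA : IsLatinRect A) :
    ∃ B : Fin (k+1) → Fin n → Fin n, IsLatinRect B ∧
      ∀ (i : Fin k) (j : Fin n), B i.castSucc j = A i j := by
  classical
  -- available symbols in column j
  set S : Fin n → Finset (Fin n) :=
    fun j => Finset.univ \ Finset.image (fun i => A i j) Finset.univ with hS
  have hrow : ∀ i, Function.Bijective (fun j => A i j) := fun i =>
    Finite.injective_iff_bijective.mp (hA.1 i)
  have hS_card : ∀ j, (S j).card = n - k := by
    intro j
    rw [hS]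
    rw [Finset.card_sdiff_of_subset (Finset.subset_univ _),
      Finset.card_image_of_injective _ (hA.2 j)]
    simp
  -- for each symbol s, the columns where s is available
  have hC_card : ∀ s : Fin n, (Finset.univ.filter fun j => s ∈ S j).card = n - k := by
    intro s
    have hmem : ∀ j, s ∈ S j ↔ ¬ ∃ i, A i j = s := by
      intro j; simp [hS]
    set g : Fin k → Fin n := fun i => (Fintype.bijInv (hrow i)) s with hg
    have hgA : ∀ i, A i (g i) = s := fun i => Fintype.rightInverse_bijInv (hrow i) s
    have hD : (Finset.univ.filter fun j => ∃ i, A i j = s) = Finset.image g Finset.univ := by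
      ext j
      simp only [Finset.mem_filter, Finset.mem_univ, true_and, Finset.mem_image]
      constructor
      · rintro ⟨i, hi⟩
        refine ⟨i, ?_⟩
        have h2 : (fun j => A i j) (g i) = (fun j => A i j) j := by
          simp only []; rw [hgA i, hi]
        exact hA.1 i h2
      · rintro ⟨i, rfl⟩
        exact ⟨i, hgA i⟩
    have hginj : Function.Injective g := by
      intro i i' h
      apply hA.2 (g i)
      show A i (g i) = A i' (g i)
      rw [hgA i, h, hgA i']
    have hDcard : (Finset.univ.filter fun j => ∃ i, A i j = s).card = k := by
      rw [hD, Finset.card_image_of_injective _ hginj]; simp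
    have : (Finset.univ.filter fun j => s ∈ S j)
        = Finset.univ \ (Finset.univ.filter fun j => ∃ i, A i j = s) := by
      ext j
      simp [hmem j]
    rw [this, Finset.card_sdiff_of_subset (Finset.subset_univ _), hDcard]
    simp
  -- Hall condition
  have hall : ∀ T : Finset (Fin n), T.card ≤ (T.biUnion S).card := by
    intro T
    have hpos : 0 < n - k := by omega
    apply Nat.le_of_mul_le_mul_right _ hpos
    set P : Finset (Fin n × Fin n) :=
      T.biUnion (fun j => (S j).map ⟨fun s => (j, s), fun a b h => by
        simpa using congrArg Prod.snd h⟩) with hP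
    have hPcard : P.card = T.card * (n - k) := by
      rw [hP, Finset.card_biUnion]
      · rw [Finset.sum_congr rfl (fun j _ => by rw [Finset.card_map, hS_card j])]
        simp [mul_comm]
      · intro j _ j' _ hne
        simp only [Finset.disjoint_left, Finset.mem_map, Function.Embedding.coeFn_mk]
        rintro ⟨a, b⟩ ⟨s, _, hs⟩ ⟨s', _, hs'⟩
        exact hne ((Prod.ext_iff.mp hs).1.trans (Prod.ext_iff.mp hs').1.symm)
    have hPmem : ∀ p ∈ P, p.1 ∈ T ∧ p.2 ∈ S p.1 := by
      rintro ⟨a, b⟩ hp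
      simp only [hP, Finset.mem_biUnion, Finset.mem_map, Function.Embedding.coeFn_mk] at hp
      obtain ⟨j, hj, s, hs, heq⟩ := hp
      cases heq
      exact ⟨hj, hs⟩
    have hfib : P.card = ∑ s ∈ T.biUnion S, (P.filter fun p => p.2 = s).card := by
      apply Finset.card_eq_sum_card_fiberwise
      intro p hp
      obtain ⟨h1, h2⟩ := hPmem p hp
      exact Finset.mem_biUnion.mpr ⟨p.1, h1, h2⟩
    have hfible : ∀ s : Fin n, (P.filter fun p => p.2 = s).card ≤ n - k := by
      intro s
      rw [← hC_card s]
      apply Finset.card_le_card_of_injOn Prod.fst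
      · rintro ⟨a, b⟩ hp
        simp only [Finset.mem_coe, Finset.mem_filter] at hp
        obtain ⟨hp, rfl⟩ := hp
        simp only [Finset.mem_coe, Finset.mem_filter, Finset.mem_univ, true_and]
        exact (hPmem _ hp).2
      · rintro ⟨a, b⟩ hp ⟨a', b'⟩ hp' h
        simp only [Finset.mem_coe, Finset.mem_filter] at hp hp'
        obtain ⟨_, rfl⟩ := hp
        obtain ⟨_, rfl⟩ := hp'
        simp only [Prod.mk.injEq]
        exact ⟨h, trivial⟩
    calc T.card * (n - k) = P.card := hPcard.symm
      _ = ∑ s ∈ T.biUnion S, (P.filter fun p => p.2 = s).card := hfib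
      _ ≤ ∑ _s ∈ T.biUnion S, (n - k) := Finset.sum_le_sum fun s _ => hfible s
      _ = (T.biUnion S).card * (n - k) := by rw [Finset.sum_const, smul_eq_mul]
  obtain ⟨f, hfinj, hfmem⟩ := (Finset.all_card_le_biUnion_card_iff_exists_injective S).mp hall
  have hfS : ∀ j i, A i j ≠ f j := by
    intro j i h
    have := hfmem j
    simp only [hS, Finset.mem_sdiff, Finset.mem_univ, true_and, Finset.mem_image] at this
    exact this ⟨i, h⟩
  refine ⟨fun i j => if h : (i : ℕ) < k then A ⟨i, h⟩ j else f j, ⟨?_, ?_⟩, ?_⟩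
  · intro i j j' h
    simp only at h
    by_cases hi : (i : ℕ) < k
    · rw [dif_pos hi, dif_pos hi] at h
      exact hA.1 ⟨i, hi⟩ h
    · rw [dif_neg hi, dif_neg hi] at h
      exact hfinj h
  · intro j i i' h
    simp only at h
    by_cases hi : (i : ℕ) < k <;> by_cases hi' : (i' : ℕ) < k
    · rw [dif_pos hi, dif_pos hi'] at h
      have := hA.2 j h
      have := congrArg Fin.val this
      exact Fin.ext (by simpa using this)
    · rw [dif_pos hi, dif_neg hi'] at h
      exact absurd h (hfS j _)
    · rw [dif_neg hi, dif_pos hi'] at h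
      exact absurd h.symm (hfS j _)
    · have : (i : ℕ) = k := by omega
      have : (i' : ℕ) = i := by omega
      exact Fin.ext this.symm
  · intro i j
    simp [Fin.castSucc, Fin.is_lt i]

lemma latin_aux (n : ℕ) : ∀ d k (hk : k ≤ n), n - k = d →
    ∀ A : Fin k → Fin n → Fin n, IsLatinRect A →
    ∃ L : Fin n → Fin n → Fin n, IsLatinSquare L ∧
      ∀ (i : Fin k) (j : Fin n), L (Fin.castLE hk i) j = A i j := by
  intro d
  induction d with
  | zero =>
    intro k hk hd A hA
    have hkn : k = n := by omega
    subst hkn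
    refine ⟨A, ⟨fun i => Finite.injective_iff_bijective.mp (hA.1 i),
      fun j => Finite.injective_iff_bijective.mp (hA.2 j)⟩, fun i j => rfl⟩
  | succ d ih =>
    intro k hk hd A hA
    have hkn : k < n := by omega
    obtain ⟨B, hB, hBA⟩ := latin_step k n hkn A hA
    obtain ⟨L, hL, hLB⟩ := ih (k+1) hkn (by omega) B hB
    refine ⟨L, hL, fun i j => ?_⟩
    have := hLB i.castSucc j
    rw [hBA] at this
    exact this

theorem latin_rect_completion (k n : ℕ) (hk : k ≤ n)
    (A : Fin k → Fin n → Fin n) (hA : IsLatinRect A) :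
    ∃ L : Fin n → Fin n → Fin n, IsLatinSquare L ∧
      ∀ (i : Fin k) (j : Fin n), L (Fin.castLE hk i) j = A i j := by
  exact latin_aux n (n - k) k hk rfl A hA
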